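/- Suppose the past assortments are nested. Then L = {(i_1,…,i_M) ∈ S_1 × ⋯ × S_M : for every m ∈ {1,…,M−1}, i_{m+1} ∈ {i_m} ∪ B_{m+1}}. -/
import Mathlib


namespace RobustAssortment

/-- `i` is the most preferred product of the assortment `S` under the ranking `σ`. -/
def isTop {n : ℕ} (σ : Equiv.Perm (Fin (n + 1))) (S : Finset (Fin (n + 1)))
    (i : Fin (n + 1)) : Prop :=
  i ∈ S ∧ ∀ j ∈ S, σ i ≤ σ j

instance {n : ℕ} (σ : Equiv.Perm (Fin (n + 1))) (S : Finset (Fin (n + 1)))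
    (i : Fin (n + 1)) : Decidable (isTop σ S i) := by
  unfold isTop; infer_instance
/-- Membership in the set `L` of tuples of products compatible with a common ranking. -/
def memL {n M : ℕ} (Sm : Fin M → Finset (Fin (n + 1)))
    (t : Fin M → Fin (n + 1)) : Prop :=
  ∃ σ : Equiv.Perm (Fin (n + 1)), ∀ m : Fin M, isTop σ (Sm m) (t m)

instance {n M : ℕ} (Sm : Fin M → Finset (Fin (n + 1))) (t : Fin M → Fin (n + 1)) :
    Decidable (memL Sm t) := by
  unfold memL; infer_instance

/-- Lemma 9 of the paper: closed form of `L` for nested past assortments. -/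
theorem statement9 (n M : ℕ) (hn : 1 ≤ n) (hM : 1 ≤ M)
    (Sm : Fin M → Finset (Fin (n + 1))) (hSm0 : ∀ m, (0 : Fin (n + 1)) ∈ Sm m)
    (hnested : ∀ m m' : Fin M, m < m' → Sm m ⊂ Sm m') :
    ∀ t : Fin M → Fin (n + 1),
      memL Sm t ↔
        ((∀ m : Fin M, t m ∈ Sm m) ∧
          ∀ (m : ℕ) (h : m + 1 < M),
            t ⟨m + 1, h⟩ ∈
              insert (t ⟨m, Nat.lt_of_succ_lt h⟩)
                (Sm ⟨m + 1, h⟩ \ Sm ⟨m, Nat.lt_of_succ_lt h⟩)) := by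
  simp only [memL, isTop]
  have hsub : ∀ m m' : Fin M, (m : ℕ) ≤ (m' : ℕ) → Sm m ⊆ Sm m' := by
    intro m m' h
    rcases eq_or_lt_of_le h with h | h
    · exact le_of_eq (congrArg Sm (Fin.ext h))
    · exact (hnested m m' h).subset
  intro t
  constructor
  · rintro ⟨σ, hσ⟩
    refine ⟨fun m => (hσ m).1, fun m h => ?_⟩
    by_cases hmem : t ⟨m + 1, h⟩ ∈ Sm ⟨m, Nat.lt_of_succ_lt h⟩
    · -- then equal to t m
      have h1 : σ (t ⟨m, Nat.lt_of_succ_lt h⟩) ≤ σ (t ⟨m + 1, h⟩) :=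
        (hσ _).2 _ hmem
      have h2 : σ (t ⟨m + 1, h⟩) ≤ σ (t ⟨m, Nat.lt_of_succ_lt h⟩) :=
        (hσ ⟨m + 1, h⟩).2 _ (hsub _ _ (by simp) ((hσ _).1))
      have : t ⟨m + 1, h⟩ = t ⟨m, Nat.lt_of_succ_lt h⟩ :=
        σ.injective (le_antisymm h2 h1)
      exact Finset.mem_insert.2 (Or.inl this)
    · exact Finset.mem_insert.2 (Or.inr (Finset.mem_sdiff.2 ⟨(hσ _).1, hmem⟩))
  · rintro ⟨h1, h2⟩
    -- key lemma
    have key : ∀ (k : ℕ) (hk : k < M) (m : Fin M), (m : ℕ) ≤ k →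
        t ⟨k, hk⟩ ∈ Sm m → t ⟨k, hk⟩ = t m := by
      intro k
      induction k with
      | zero =>
        intro hk m hm _
        have : (⟨0, hk⟩ : Fin M) = m := Fin.ext (by simp only [Fin.val_mk]; omega)
        rw [this]
      | succ k ih =>
        intro hk m hm hmem
        rcases eq_or_lt_of_le hm with he | hlt
        · have : (⟨k + 1, hk⟩ : Fin M) = m := Fin.ext (by simp only [Fin.val_mk]; omega)
          rw [this]
        · have hm' : (m : ℕ) ≤ k := by omega
          rcases Finset.mem_insert.1 (h2 k hk) with he | hd
          · rw [he] at hmem ⊢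
            exact ih (Nat.lt_of_succ_lt hk) m hm' hmem
          · exfalso
            have := (Finset.mem_sdiff.1 hd).2
            exact this (hsub m ⟨k, Nat.lt_of_succ_lt hk⟩ hm' hmem)
    -- weight function
    classical
    set A : Fin (n + 1) → ℕ := fun x =>
      (Finset.univ.filter fun m : Fin M => t m = x).sup fun m => (m : ℕ) + 1 with hA
    have hAle : ∀ x, A x ≤ M := by
      intro x
      refine Finset.sup_le fun m _ => m.isLt
    have hAt : ∀ m : Fin M, (m : ℕ) + 1 ≤ A (t m) := by
      intro m
      exact Finset.le_sup (f := fun m : Fin M => (m : ℕ) + 1)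
        (Finset.mem_filter.2 ⟨Finset.mem_univ _, rfl⟩)
    have hAlt : ∀ (m : Fin M) (j : Fin (n + 1)), j ∈ Sm m → j ≠ t m → A j < A (t m) := by
      intro m j hj hne
      have : A j ≤ (m : ℕ) := by
        refine Finset.sup_le fun m' hm' => ?_
        have htm' : t m' = j := (Finset.mem_filter.1 hm').2
        by_contra hc
        have hle : (m : ℕ) ≤ (m' : ℕ) := by omega
        have : t m' = t m := by
          have := key (m' : ℕ) m'.isLt m hle (by rw [htm']; exact hj)
          simpa using this
        exact hne (by rw [← htm', this])
      have := hAt m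
      omega
    set w : Fin (n + 1) → ℕ := fun x => M - A x with hw
    set σ : Equiv.Perm (Fin (n + 1)) := (Tuple.sort w)⁻¹ with hσ
    have hmono : ∀ x y : Fin (n + 1), σ y ≤ σ x → w y ≤ w x := by
      intro x y hle
      have := Tuple.monotone_sort w hle
      simpa [hσ, Function.comp] using this
    refine ⟨σ, fun m => ⟨h1 m, fun j hj => ?_⟩⟩
    by_cases hje : j = t m
    · rw [hje]
    · by_contra hc
      push_neg at hc
      have hwle : w j ≤ w (t m) := hmono _ _ (le_of_lt hc)
      have hAltj := hAlt m j hj hje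
      have h3 := hAle (t m)
      have h4 := hAt m
      simp only [hw] at hwle
      omega


end RobustAssortment
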